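/- arXiv:1801.00724 — 3 statements merged into one kernel-verified Lean document; each statement's English description precedes it below -/
import Mathlib

section
/- Let (T, ⪯) be a directed set and {f_t : t ∈ T} an increasing family of lower semicontinuous functions on a topological space X (i.e., t₁ ⪯ t₂ implies f_{t₁} ≤ f_{t₂} pointwise). Let B ⊆ X be closed, let τ be a topology on X coarser than the original, assume each f_t is τ-lower semicontinuous, B is τ-closed, and there exists t₀ ∈ T such that f_{t₀} restricted to B is τ-inf-compact (all sublevel sets {x ∈ B : f_{t₀}(x) ≤ α} are τ-compact). Then inf_{x∈B} sup_{t∈T} f_t(x) = sup_{t∈T} inf_{x∈B} f_t(x), and moreover this common value is attained at some x̄ ∈ B (robust minimum). -/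
open Filter

private lemma aux {X : Type*} [TopologicalSpace X]
    {T : Type*} [Preorder T]
    (hdir : ∀ a b : T, ∃ c : T, a ≤ c ∧ b ≤ c)
    (f : T → X → EReal)
    (hlsc : ∀ t : T, LowerSemicontinuous (f t))
    (hmono : ∀ s t : T, s ≤ t → ∀ x : X, f s x ≤ f t x)
    (B : Set X) (hBne : B.Nonempty) (hB : IsClosed B)
    (t₀ : T) (hcpt : ∀ α : ℝ, IsCompact {x | x ∈ B ∧ f t₀ x ≤ (α : EReal)}) :
    (⨅ x ∈ B, ⨆ t : T, f t x) = (⨆ t : T, ⨅ x ∈ B, f t x) ∧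
      ∃ xb ∈ B, (⨆ t : T, f t xb) = ⨆ t : T, ⨅ x ∈ B, f t x := by
  set M : EReal := ⨆ t : T, ⨅ x ∈ B, f t x with hM
  -- the key claim: a point where the sup is ≤ M
  have key : ∃ xb ∈ B, (⨆ t : T, f t xb) ≤ M := by
    rcases eq_top_or_lt_top M with htop | hlt
    · obtain ⟨x, hx⟩ := hBne
      exact ⟨x, hx, htop ▸ le_top⟩
    · obtain ⟨α₀, hα₀, -⟩ := EReal.exists_between_coe_real hlt
      -- index set
      set ι := T × {α : ℝ // M < (α : EReal) ∧ α ≤ α₀} with hι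
      have : Nonempty ι := ⟨⟨t₀, ⟨α₀, hα₀, le_refl _⟩⟩⟩
      set Z : ι → Set X := fun i =>
        {x | x ∈ B ∧ f t₀ x ≤ (α₀ : EReal) ∧ f i.1 x ≤ ((i.2 : ℝ) : EReal)} with hZ
      -- each Z i is nonempty
      have hZne : ∀ i, (Z i).Nonempty := by
        rintro ⟨t, α, hα1, hα2⟩
        obtain ⟨t', ht1, ht2⟩ := hdir t₀ t
        have hβ : M < ((min α α₀ : ℝ) : EReal) := by
          rcases le_total α α₀ with h | h
          · simpa [min_eq_left h] using hα1
          · simpa [min_eq_right h] using hα₀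
        have hinf : (⨅ x ∈ B, f t' x) < ((min α α₀ : ℝ) : EReal) :=
          lt_of_le_of_lt (le_iSup (fun t : T => ⨅ x ∈ B, f t x) t') hβ
        rw [iInf_lt_iff] at hinf
        obtain ⟨x, hx⟩ := hinf
        rw [iInf_lt_iff] at hx
        obtain ⟨hxB, hxlt⟩ := hx
        have h1 : f t₀ x ≤ (α₀ : EReal) :=
          le_trans (hmono _ _ ht1 x) (le_trans hxlt.le (by exact_mod_cast min_le_right α α₀))
        have h2 : f t x ≤ ((α : ℝ) : EReal) :=
          le_trans (hmono _ _ ht2 x) (le_trans hxlt.le (by exact_mod_cast min_le_left α α₀))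
        exact ⟨x, hxB, h1, h2⟩
      -- directedness
      have hZdir : Directed (· ⊇ ·) Z := by
        rintro ⟨t₁, α₁, hα₁, hα₁'⟩ ⟨t₂, α₂, hα₂, hα₂'⟩
        obtain ⟨t', ht1, ht2⟩ := hdir t₁ t₂
        have hmin : M < ((min α₁ α₂ : ℝ) : EReal) := by
          rcases le_total α₁ α₂ with h | h
          · simpa [min_eq_left h] using hα₁
          · simpa [min_eq_right h] using hα₂
        refine ⟨⟨t', ⟨min α₁ α₂, hmin, le_trans (min_le_left _ _) hα₁'⟩⟩, ?_, ?_⟩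
        · rintro x ⟨hxB, h0, h1⟩
          exact ⟨hxB, h0, le_trans (hmono _ _ ht1 x)
            (le_trans h1 (by exact_mod_cast min_le_left α₁ α₂))⟩
        · rintro x ⟨hxB, h0, h1⟩
          exact ⟨hxB, h0, le_trans (hmono _ _ ht2 x)
            (le_trans h1 (by exact_mod_cast min_le_right α₁ α₂))⟩
      -- closedness
      have hZcl : ∀ i, IsClosed (Z i) := by
        rintro ⟨t, α, hα⟩
        have : Z ⟨t, α, hα⟩ =
            B ∩ (f t₀ ⁻¹' Set.Iic (α₀ : EReal) ∩ f t ⁻¹' Set.Iic ((α : ℝ) : EReal)) := by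
          ext x; simp [hZ, Set.mem_setOf_eq]; tauto
        rw [this]
        exact hB.inter (((hlsc t₀).isClosed_preimage _).inter
          ((hlsc t).isClosed_preimage _))
      -- compactness
      have hZcpt : ∀ i, IsCompact (Z i) := by
        intro i
        refine (hcpt α₀).of_isClosed_subset (hZcl i) ?_
        rintro x ⟨hxB, h0, -⟩
        exact ⟨hxB, h0⟩
      obtain ⟨xb, hxb⟩ := IsCompact.nonempty_iInter_of_directed_nonempty_isCompact_isClosed
        Z hZdir hZne hZcpt hZcl
      simp only [Set.mem_iInter] at hxb
      have hxbB : xb ∈ B := (hxb ⟨t₀, ⟨α₀, hα₀, le_refl _⟩⟩).1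
      refine ⟨xb, hxbB, iSup_le fun t => ?_⟩
      refine le_of_forall_gt_imp_ge_of_dense fun c hc => ?_
      induction c with
      | bot => exact absurd hc (by simp)
      | top => exact le_top
      | coe c =>
        rcases le_total c α₀ with h | h
        · exact (hxb ⟨t, ⟨c, hc, h⟩⟩).2.2
        · exact le_trans (hxb ⟨t, ⟨α₀, hα₀, le_refl _⟩⟩).2.2 (by exact_mod_cast h)
  obtain ⟨xb, hxbB, hxble⟩ := key
  have hge : M ≤ ⨅ x ∈ B, ⨆ t : T, f t x :=
    le_iInf₂ fun x hx => iSup_mono fun t => iInf₂_le x hx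
  have hle : (⨅ x ∈ B, ⨆ t : T, f t x) ≤ M :=
    le_trans (iInf₂_le xb hxbB) hxble
  have heq : (⨆ t : T, f t xb) = M :=
    le_antisymm hxble (le_trans hge (iInf₂_le xb hxbB))
  exact ⟨le_antisymm hle hge, xb, hxbB, heq⟩

/-- Sufficient condition for a robust minimum: an increasing family of `τ`-lsc functions
over a directed index set, on a `τ`-closed set `B`, with one member `τ`-inf-compact on `B`,
has a robust minimum on `B`. -/
theorem stmt1 {X : Type*} [t1 : TopologicalSpace X] (τ : TopologicalSpace X) (hτ : τ ≤ t1)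
    {T : Type*} [Preorder T]
    (hdir : ∀ a b : T, ∃ c : T, a ≤ c ∧ b ≤ c)
    (f : T → X → EReal)
    (hnbot : ∀ t x, f t x ≠ ⊥)
    (hlsc : ∀ t : T, @LowerSemicontinuous X EReal τ _ (f t))
    (hmono : ∀ s t : T, s ≤ t → ∀ x : X, f s x ≤ f t x)
    (B : Set X) (hBne : B.Nonempty) (hB : @IsClosed X τ B)
    (t₀ : T) (hcpt : ∀ α : ℝ, @IsCompact X τ {x | x ∈ B ∧ f t₀ x ≤ (α : EReal)}) :
    (⨅ x ∈ B, ⨆ t : T, f t x) = (⨆ t : T, ⨅ x ∈ B, f t x) ∧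
      ∃ xb ∈ B, (⨆ t : T, f t xb) = ⨆ t : T, ⨅ x ∈ B, f t x := by
  exact @aux X τ T _ hdir f hlsc hmono B hBne hB t₀ hcpt
end

section
/- Let X be a finite-dimensional real normed space, let x*₁,…,x*ₖ ∈ X* with k > dim X + 1, and let λ₁,…,λₖ > 0 with x* = Σᵢ λᵢ x*ᵢ. Then there exist coefficients μ₁,…,μₖ ≥ 0 with x* = Σᵢ μᵢ x*ᵢ, Σᵢ μᵢ = Σᵢ λᵢ, at most k−1 of the μᵢ nonzero, and μᵢ ≤ 2λᵢ for every i. -/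
/-- Carathéodory-type reduction of multipliers: if `k > dim X + 1` and
`x* = Σᵢ λᵢ x*ᵢ` with all `λᵢ > 0`, then one can rewrite `x*` with nonnegative
multipliers `μᵢ`, same total sum, at most `k − 1` of them nonzero, and `μᵢ ≤ 2 λᵢ`. -/
theorem stmt3 {X : Type*} [NormedAddCommGroup X] [NormedSpace ℝ X] [FiniteDimensional ℝ X]
    {k : ℕ} (hk : Module.finrank ℝ X + 1 < k)
    (p : Fin k → (X →L[ℝ] ℝ)) (lam : Fin k → ℝ) (hlam : ∀ i, 0 < lam i)
    (xs : X →L[ℝ] ℝ) (hx : xs = ∑ i, lam i • p i) :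
    ∃ mu : Fin k → ℝ, (∀ i, 0 ≤ mu i) ∧ xs = ∑ i, mu i • p i ∧
      (∑ i, mu i) = (∑ i, lam i) ∧
      (Finset.univ.filter fun i => mu i ≠ 0).card ≤ k - 1 ∧
      ∀ i, mu i ≤ 2 * lam i := by
  -- the vectors (p i, 1) are linearly dependent
  have hdep : ¬ LinearIndependent ℝ (fun i : Fin k => ((p i, (1:ℝ)) : (X →L[ℝ] ℝ) × ℝ)) := by
    intro h
    have hcard := h.fintype_card_le_finrank
    rw [Fintype.card_fin, Module.finrank_prod] at hcard
    have hdual : Module.finrank ℝ (X →L[ℝ] ℝ) = Module.finrank ℝ X := by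
      rw [← (LinearMap.toContinuousLinearMap :
        (X →ₗ[ℝ] ℝ) ≃ₗ[ℝ] (X →L[ℝ] ℝ)).finrank_eq,
        Module.finrank_linearMap, Module.finrank_self, mul_one]
    rw [hdual, Module.finrank_self] at hcard
    omega
  rw [Fintype.not_linearIndependent_iff] at hdep
  obtain ⟨a, hsum, i0, hi0⟩ := hdep
  have hsum1 : (∑ i, a i • p i) = 0 := by
    have := congrArg Prod.fst hsum
    simpa [Prod.fst_sum] using this
  have hsum2 : (∑ i, a i) = 0 := by
    have := congrArg Prod.snd hsum
    simpa [Prod.snd_sum] using this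
  -- choose j minimizing lam i / |a i| over the support of a
  set S : Finset (Fin k) := Finset.univ.filter (fun i => a i ≠ 0) with hS
  have hSne : S.Nonempty := ⟨i0, by simp [hS, hi0]⟩
  obtain ⟨j, hjS, hjmin⟩ := S.exists_min_image (fun i => lam i / |a i|) hSne
  have haj : a j ≠ 0 := by simpa [hS] using hjS
  have hajpos : 0 < |a j| := abs_pos.mpr haj
  set t : ℝ := -(lam j) / a j with ht
  have habs_t : |t| = lam j / |a j| := by
    rw [ht, abs_div, abs_neg, abs_of_pos (hlam j)]
  -- key bound: |t * a i| ≤ lam i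
  have hbound : ∀ i, |t * a i| ≤ lam i := by
    intro i
    by_cases hai : a i = 0
    · simp [hai]; exact (hlam i).le
    · have hiS : i ∈ S := by simp [hS, hai]
      have hmin := hjmin i hiS
      have haipos : 0 < |a i| := abs_pos.mpr hai
      rw [abs_mul, habs_t]
      calc lam j / |a j| * |a i| ≤ lam i / |a i| * |a i| := by
            exact mul_le_mul_of_nonneg_right hmin haipos.le
        _ = lam i := by field_simp
  refine ⟨fun i => lam i + t * a i, ?_, ?_, ?_, ?_, ?_⟩
  · intro i
    show 0 ≤ lam i + t * a i
    have := hbound i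
    have := neg_abs_le (t * a i)
    linarith
  · rw [hx]
    rw [← sub_eq_zero, ← Finset.sum_sub_distrib]
    have : ∀ i : Fin k, lam i • p i - (lam i + t * a i) • p i = -(t • (a i • p i)) := by
      intro i
      rw [smul_smul]
      module
    simp_rw [this]
    simp [← Finset.smul_sum, hsum1]
  · rw [Finset.sum_add_distrib, ← Finset.mul_sum, hsum2, mul_zero, add_zero]
  · have hjzero : lam j + t * a j = 0 := by
      rw [ht]; field_simp; ring
    have hsub : (Finset.univ.filter fun i => lam i + t * a i ≠ 0) ⊆ Finset.univ.erase j := by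
      intro i hi
      simp only [Finset.mem_filter, Finset.mem_univ, true_and] at hi
      refine Finset.mem_erase.mpr ⟨?_, Finset.mem_univ i⟩
      rintro rfl; exact hi hjzero
    calc (Finset.univ.filter fun i => lam i + t * a i ≠ 0).card
        ≤ (Finset.univ.erase j).card := Finset.card_le_card hsub
      _ = k - 1 := by rw [Finset.card_erase_of_mem (Finset.mem_univ j), Finset.card_univ,
          Fintype.card_fin]
  · intro i
    show lam i + t * a i ≤ 2 * lam i
    have := hbound i
    have := le_abs_self (t * a i)
    linarith
end

section
/- Let X be a normed space, D ⊆ X convex, and suppose h, g : X → ℝ∪{+∞} are convex with h(x) = g(x) for all x ∈ D. If x ∈ D lies in the relative interior of D (within aff D) and g is continuous at x relative to aff D, then ∂(h + δ_{aff D})(x) = ∂(g + δ_{aff D})(x). -/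
open Filter Topology Classical

variable {X : Type*} [NormedAddCommGroup X] [NormedSpace ℝ X]

/-- Extended-real-valued indicator function of a set. -/
noncomputable def indicatorE (A : Set X) : X → EReal := fun y => if y ∈ A then (0 : EReal) else ⊤

/-- The convex subdifferential of an extended-real-valued function. -/
def convexSubdiffE (h : X → EReal) (x : X) : Set (X →L[ℝ] ℝ) :=
  {p | ∀ y : X, ((p (y - x) : ℝ) : EReal) + h x ≤ h y}

/-- Convexity for an extended-real-valued function. -/
def ERealConvexOn (h : X → EReal) : Prop :=
  ∀ a b : X, ∀ θ : ℝ, 0 ≤ θ → θ ≤ 1 →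
    h (θ • a + (1 - θ) • b) ≤ ((θ : ℝ) : EReal) * h a + (((1 - θ : ℝ)) : EReal) * h b

lemma intrinsic_ball {D : Set X} {x : X} (hx : x ∈ intrinsicInterior ℝ D) :
    ∃ ε > 0, ∀ z ∈ (affineSpan ℝ D : Set X), dist z x < ε → z ∈ D := by
  obtain ⟨x', hx', rfl⟩ := mem_intrinsicInterior.mp hx
  obtain ⟨ε, hε, hball⟩ := Metric.mem_nhds_iff.mp (mem_interior_iff_mem_nhds.mp hx')
  refine ⟨ε, hε, fun z hz hdz => ?_⟩
  have : (⟨z, hz⟩ : affineSpan ℝ D) ∈ Metric.ball x' ε := by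
    simpa [Metric.mem_ball, Subtype.dist_eq] using hdz
  exact hball this

lemma aux_sub {φ ψ : X → EReal} (hconvψ : ERealConvexOn ψ) (hψbot : ∀ y, ψ y ≠ ⊥)
    {D : Set X} (hagree : ∀ y ∈ D, φ y = ψ y)
    {x : X} (hx : x ∈ intrinsicInterior ℝ D) {a : ℝ} (hφx : φ x = (a : ℝ))
    (hψx : ψ x = (a : ℝ)) :
    convexSubdiffE (fun y => φ y + indicatorE (affineSpan ℝ D : Set X) y) x ⊆
      convexSubdiffE (fun y => ψ y + indicatorE (affineSpan ℝ D : Set X) y) x := by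
  intro p hp y
  have hxD : x ∈ D := intrinsicInterior_subset hx
  have hxA : x ∈ (affineSpan ℝ D : Set X) := subset_affineSpan ℝ D hxD
  simp only [indicatorE, if_pos hxA, hψx, add_zero]
  by_cases hyA : y ∈ (affineSpan ℝ D : Set X)
  · simp only [if_pos hyA, add_zero]
    rcases eq_or_ne (ψ y) ⊤ with hψy | hψy
    · rw [hψy]; exact le_top
    obtain ⟨r, hr⟩ : ∃ r : ℝ, ψ y = (r : ℝ) := by
      lift ψ y to ℝ using ⟨hψy, hψbot y⟩ with r
      exact ⟨r, rfl⟩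
    obtain ⟨ε, hε, hball⟩ := intrinsic_ball hx
    set t : ℝ := min 1 (ε / (2 * (‖y - x‖ + 1))) with ht_def
    have hnorm : (0:ℝ) < ‖y - x‖ + 1 := by positivity
    have ht0 : 0 < t := lt_min one_pos (by positivity)
    have ht1 : t ≤ 1 := min_le_left _ _
    set z : X := x + t • (y - x) with hz_def
    have hzA : z ∈ (affineSpan ℝ D : Set X) := by
      have := AffineSubspace.smul_vsub_vadd_mem (affineSpan ℝ D) t hyA hxA hxA
      simpa [vsub_eq_sub, vadd_eq_add, add_comm] using this
    have hzD : z ∈ D := by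
      apply hball z hzA
      have h1 : dist z x = t * ‖y - x‖ := by
        simp [hz_def, dist_eq_norm, norm_smul, abs_of_pos ht0]
      have h2 : t * ‖y - x‖ < ε := by
        have ht' : t ≤ ε / (2 * (‖y - x‖ + 1)) := min_le_right _ _
        have : t * ‖y - x‖ ≤ ε / (2 * (‖y - x‖ + 1)) * ‖y - x‖ :=
          mul_le_mul_of_nonneg_right ht' (norm_nonneg _)
        calc t * ‖y - x‖ ≤ ε / (2 * (‖y - x‖ + 1)) * ‖y - x‖ := this
          _ < ε := by
            rw [div_mul_eq_mul_div, div_lt_iff₀ (by positivity)]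
            nlinarith [norm_nonneg (y - x)]
      rw [h1]; exact h2
    have hsub := hp z
    simp only [indicatorE, if_pos hxA, if_pos (subset_affineSpan ℝ D hzD), hφx,
      add_zero, hagree z hzD] at hsub
    have hpz : p (z - x) = t * p (y - x) := by
      rw [hz_def]; simp [map_smul]
    have hconv := hconvψ y x t ht0.le ht1
    have hzeq : t • y + (1 - t) • x = z := by
      rw [hz_def]; module
    rw [hzeq, hψx, hr] at hconv
    rw [hpz] at hsub
    have hchain : ((t * p (y - x) + a : ℝ) : EReal) ≤ ((t * r + (1 - t) * a : ℝ) : EReal) := by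
      push_cast
      calc ((t * p (y - x) : ℝ) : EReal) + (a : ℝ) ≤ ψ z := hsub
        _ ≤ (t : EReal) * (r : ℝ) + ((1 - t : ℝ) : EReal) * (a : ℝ) := hconv
        _ = ((t * r : ℝ) : EReal) + ((1 - t) * a : ℝ) := by norm_cast
    rw [EReal.coe_le_coe_iff] at hchain
    have hgoal : p (y - x) + a ≤ r := by nlinarith
    rw [hr]
    exact_mod_cast hgoal
  · simp only [if_neg hyA]
    rw [EReal.add_top_of_ne_bot (hψbot y)]
    exact le_top

/-- Two convex functions agreeing on a convex set `D` have the same subdifferential relative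
to `aff D` at relative interior points of `D` where `g` is continuous relative to `aff D`. -/
theorem stmt16 (h g : X → EReal)
    (hconvh : ERealConvexOn h) (hconvg : ERealConvexOn g)
    (hboth : ∀ y : X, h y ≠ ⊥) (hbotg : ∀ y : X, g y ≠ ⊥)
    (D : Set X) (hD : Convex ℝ D) (hDdom : ∀ y ∈ D, h y ≠ ⊤)
    (hagree : ∀ y ∈ D, h y = g y)
    (x : X) (hx : x ∈ intrinsicInterior ℝ D)
    (hcont : ∃ U ∈ 𝓝 x, (∀ y ∈ U ∩ (affineSpan ℝ D : Set X), g y ≠ ⊤) ∧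
      ContinuousOn (fun y => (g y).toReal) (U ∩ (affineSpan ℝ D : Set X))) :
    convexSubdiffE (fun y => h y + indicatorE (affineSpan ℝ D : Set X) y) x =
      convexSubdiffE (fun y => g y + indicatorE (affineSpan ℝ D : Set X) y) x := by
  have hxD : x ∈ D := intrinsicInterior_subset hx
  obtain ⟨a, ha⟩ : ∃ a : ℝ, h x = (a : ℝ) := by
    lift h x to ℝ using ⟨hDdom x hxD, hboth x⟩ with a
    exact ⟨a, rfl⟩
  have hgx : g x = (a : ℝ) := (hagree x hxD).symm.trans ha
  exact Set.Subset.antisymm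
    (aux_sub hconvg hbotg hagree hx ha hgx)
    (aux_sub hconvh hboth (fun y hy => (hagree y hy).symm) hx hgx ha)
end
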